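/- Let T : ℝ → ℝ be a terrain, and suppose T is affine on [a, b] with a < b. If a point P g with g < a or g > b sees both P p and P q for p, q ∈ [a, b] with p ≤ q, then P g sees P r for every r ∈ [p, q]. (The visible portion of a single edge from any fixed guard is an interval.) -/

import Mathlib

def Sees (T : ℝ → ℝ) (x y : ℝ) : Prop :=
  ∀ t ∈ Set.Icc (0:ℝ) 1, (1 - t) * T x + t * T y ≥ T ((1 - t) * x + t * y)

lemma sees_neg {T : ℝ → ℝ} {x y : ℝ} (h : Sees T x y) :
    Sees (fun z => T (-z)) (-x) (-y) := by
  intro t ht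
  have h1 := h t ht
  simp only [neg_neg]
  have harg : (1 - t) * -x + t * -y = -((1 - t) * x + t * y) := by ring
  rw [harg, neg_neg]
  exact h1

lemma key (T : ℝ → ℝ) (a b g p q : ℝ) (hab : a < b)
    (m c : ℝ) (haff : ∀ x ∈ Set.Icc a b, T x = m * x + c)
    (hg : g < a)
    (hp : p ∈ Set.Icc a b) (hq : q ∈ Set.Icc a b) (hpq : p ≤ q)
    (hsp : Sees T g p) (hsq : Sees T g q) :
    ∀ r ∈ Set.Icc p q, Sees T g r := by
  intro r hr
  rcases eq_or_lt_of_le hq.1 with hqa | hqa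
  · -- q = a, hence p = r = q
    have hrq : r = q := le_antisymm hr.2 (by linarith [hr.1, hp.1, hqa.symm ▸ hpq])
    rw [hrq]; exact hsq
  · -- a < q
    have hpg : g < p := lt_of_lt_of_le hg hp.1
    have hqg : (0:ℝ) < q - g := by linarith [hq.1]
    have hrg : g < r := lt_of_lt_of_le hpg hr.1
    have hrb : r ≤ b := le_trans hr.2 hq.2
    have hTq : T q = m * q + c := haff q hq
    have hTp : T p = m * p + c := haff p hp
    have hTr : T r = m * r + c := haff r ⟨le_trans hp.1 hr.1, hrb⟩
    set D : ℝ := T g - (m * g + c) with hD_def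
    have hTg : T g = m * g + c + D := by rw [hD_def]; ring
    -- Step 1: D ≥ 0
    have hD : 0 ≤ D := by
      set t0 : ℝ := (a - g) / (q - g) with ht0_def
      have ht00 : 0 ≤ t0 := div_nonneg (by linarith) (by linarith)
      have ht0lt : t0 < 1 := by rw [div_lt_one hqg]; linarith
      have hx0 : (1 - t0) * g + t0 * q = a := by
        have h0 : t0 * (q - g) = a - g := by rw [ht0_def]; exact div_mul_cancel₀ _ hqg.ne'
        linear_combination h0
      have h1 := hsq t0 ⟨ht00, ht0lt.le⟩
      rw [hx0] at h1
      have hTa : T a = m * a + c := haff a ⟨le_refl a, hab.le⟩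
      have ht0q : t0 * (q - g) = a - g := by rw [ht0_def]; exact div_mul_cancel₀ _ hqg.ne'
      have hm : m * (t0 * (q - g)) = m * (a - g) := by rw [ht0q]
      rw [hTq, hTa, hTg] at h1
      nlinarith [h1, hm, ht0lt]
    -- Main: fix t
    intro t ht
    set x : ℝ := (1 - t) * g + t * r with hx_def
    have hgx : g ≤ x := by nlinarith [ht.1, ht.2, hrg]
    have hxr : x ≤ r := by nlinarith [ht.1, ht.2, hrg]
    rcases le_or_gt a x with hax | hax
    · -- x ∈ [a, b]
      have hTx : T x = m * x + c := haff x ⟨hax, le_trans hxr hrb⟩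
      rw [hTx, hTg, hTr, hx_def]
      nlinarith [mul_nonneg (by linarith [ht.2] : (0:ℝ) ≤ 1 - t) hD]
    · -- x ∈ [g, a) ⊆ [g, p]
      set u : ℝ := (x - g) / (p - g) with hu_def
      have hpg' : (0:ℝ) < p - g := by linarith
      have hu0 : 0 ≤ u := div_nonneg (by linarith) hpg'.le
      have hu1 : u ≤ 1 := by
        rw [div_le_one hpg']
        linarith [hp.1]
      have hux : (1 - u) * g + u * p = x := by
        have h0 : u * (p - g) = x - g := by rw [hu_def]; exact div_mul_cancel₀ _ hpg'.ne'
        linear_combination h0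
      have h2 := hsp u ⟨hu0, hu1⟩
      rw [hux] at h2
      have hueq : u * (p - g) = x - g := by rw [hu_def]; exact div_mul_cancel₀ _ hpg'.ne'
      have hueq' : u * (p - g) = t * (r - g) := by rw [hueq, hx_def]; ring
      have hut : t ≤ u := by
        nlinarith [hueq', hpg', mul_le_mul_of_nonneg_left hr.1 ht.1]
      have hmu : m * (u * (p - g)) = m * (t * (r - g)) := by rw [hueq']
      have hDtu : 0 ≤ (u - t) * D := mul_nonneg (by linarith) hD
      calc (1 - t) * T g + t * T r ≥ (1 - u) * T g + u * T p := by
            rw [hTg, hTr, hTp]; nlinarith [hmu, hDtu]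
        _ ≥ T x := h2

theorem visible_part_of_edge_is_interval (T : ℝ → ℝ) (a b g p q : ℝ)
    (hab : a < b)
    (haff : ∃ m c : ℝ, ∀ x ∈ Set.Icc a b, T x = m * x + c)
    (hg : g < a ∨ b < g)
    (hp : p ∈ Set.Icc a b) (hq : q ∈ Set.Icc a b) (hpq : p ≤ q)
    (hsp : Sees T g p) (hsq : Sees T g q) :
    ∀ r ∈ Set.Icc p q, Sees T g r := by
  obtain ⟨m, c, haff⟩ := haff
  rcases hg with hg | hg
  · exact key T a b g p q hab m c haff hg hp hq hpq hsp hsq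
  · intro r hr
    have haff' : ∀ x ∈ Set.Icc (-b) (-a), (fun z => T (-z)) x = (-m) * x + c := by
      intro x hx
      simp only
      rw [haff (-x) ⟨by linarith [hx.2], by linarith [hx.1]⟩]
      ring
    have h := key (fun z => T (-z)) (-b) (-a) (-g) (-q) (-p) (by linarith)
      (-m) c haff' (by linarith)
      ⟨by linarith [hq.2], by linarith [hq.1]⟩
      ⟨by linarith [hp.2], by linarith [hp.1]⟩
      (by linarith) (sees_neg hsq) (sees_neg hsp)
      (-r) ⟨by linarith [hr.2], by linarith [hr.1]⟩
    have h2 := sees_neg h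
    simp only [neg_neg] at h2
    exact h2
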